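/- (Corollary 1: hard-threshold exponential weight.) Fix α ∈ (0,1), define the weight w(u) = e^{−u}·1{e^{−u} > α} and, for μ ∈ ℝ^p and symmetric positive definite V, the central region B(μ,V) = { x ∈ ℝ^p : d(x,μ,V) < ln(1/α) }. Let f(x) = det(V0)^{−1/2} ψ(d(x,μ0,V0)) be an elliptical density on ℝ^p. Then for every a > 0, taking (μ,V) = (μ0, aV0), the truncated estimating equations hold: ∫_{B(μ,V)} e^{−d(x,μ,V)} (x−μ) f(x) dx = 0 and ∫_{B(μ,V)} e^{−d(x,μ,V)} ( (x−μ)(x−μ)ᵀ − (d(x,μ,V)/p)·V ) f(x) dx = 0. -/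

import Mathlib

open MeasureTheory Matrix Finset

/-- Mahalanobis-type squared distance `d(x, μ, V) = (x−μ)ᵀ V⁻¹ (x−μ)`. -/
noncomputable def mahal {p : ℕ} (x μ : EuclideanSpace ℝ (Fin p))
    (V : Matrix (Fin p) (Fin p) ℝ) : ℝ :=
  ∑ i, ∑ j, (x i - μ i) * V⁻¹ i j * (x j - μ j)

/-- The central region `B(μ,V) = {x : d(x,μ,V) < ln(1/α)}`. -/
noncomputable def centralRegion {p : ℕ} (α : ℝ) (μ : EuclideanSpace ℝ (Fin p))
    (V : Matrix (Fin p) (Fin p) ℝ) : Set (EuclideanSpace ℝ (Fin p)) :=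
  {x | mahal x μ V < Real.log (1 / α)}

namespace HT
variable {p : ℕ}

lemma dot_eq (V : Matrix (Fin p) (Fin p) ℝ) (y : Fin p → ℝ) :
    y ⬝ᵥ V *ᵥ y = ∑ i, ∑ j, y i * V i j * y j := by
  simp [dotProduct, mulVec, Finset.mul_sum, mul_assoc]

lemma mahal_dot (x μ : EuclideanSpace ℝ (Fin p)) (V : Matrix (Fin p) (Fin p) ℝ) :
    mahal x μ V = (fun i => x i - μ i) ⬝ᵥ V⁻¹ *ᵥ (fun i => x i - μ i) := by
  rw [dot_eq]; rfl

lemma quad_inv {M V : Matrix (Fin p) (Fin p) ℝ} (h : Mᵀ * V * M = V) (y : Fin p → ℝ) :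
    (M *ᵥ y) ⬝ᵥ V *ᵥ (M *ᵥ y) = y ⬝ᵥ V *ᵥ y := by
  conv_rhs => rw [← h]
  rw [Matrix.mul_assoc, ← mulVec_mulVec y Mᵀ (V * M), dotProduct_mulVec y Mᵀ,
    vecMul_transpose, mulVec_mulVec]

lemma dot_sq (N : Matrix (Fin p) (Fin p) ℝ) (y : Fin p → ℝ) :
    y ⬝ᵥ (Nᵀ * N) *ᵥ y = (N *ᵥ y) ⬝ᵥ (N *ᵥ y) := by
  rw [← mulVec_mulVec, dotProduct_mulVec y Nᵀ, vecMul_transpose]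

end HT

namespace HT2
variable {p : ℕ}

noncomputable def TM (μ0 : EuclideanSpace ℝ (Fin p)) (M : Matrix (Fin p) (Fin p) ℝ) :
    EuclideanSpace ℝ (Fin p) → EuclideanSpace ℝ (Fin p) :=
  fun x => μ0 + Matrix.toEuclideanLin M (x - μ0)

lemma TM_coord (μ0 : EuclideanSpace ℝ (Fin p)) (M : Matrix (Fin p) (Fin p) ℝ)
    (x : EuclideanSpace ℝ (Fin p)) :
    (fun i => TM μ0 M x i - μ0 i) = M *ᵥ (fun i => x i - μ0 i) := by
  funext i
  simp [TM, Matrix.toEuclideanLin_apply]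
  rfl

lemma det_toEuclideanLin (M : Matrix (Fin p) (Fin p) ℝ) :
    LinearMap.det (Matrix.toEuclideanLin M) = M.det := by
  exact LinearMap.det_toLin (PiLp.basisFun 2 ℝ (Fin p)) M

lemma TM_measurePreserving (μ0 : EuclideanSpace ℝ (Fin p)) {M : Matrix (Fin p) (Fin p) ℝ}
    (hdet : |M.det| = 1) : MeasurePreserving (TM μ0 M) volume volume := by
  have hd0 : M.det ≠ 0 := by intro h; rw [h] at hdet; simp at hdet
  have h1 : MeasurePreserving (fun x : EuclideanSpace ℝ (Fin p) => x - μ0) volume volume :=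
    measurePreserving_sub_right volume μ0
  have h3 : MeasurePreserving (fun v : EuclideanSpace ℝ (Fin p) => μ0 + v) volume volume :=
    measurePreserving_add_left volume μ0
  have hdL : LinearMap.det (Matrix.toEuclideanLin M) ≠ 0 := by
    rw [det_toEuclideanLin]; exact hd0
  have hL : MeasurePreserving (Matrix.toEuclideanLin M) volume volume := by
    refine ⟨(LinearMap.continuous_of_finiteDimensional _).measurable, ?_⟩
    rw [Measure.map_linearMap_addHaar_eq_smul_addHaar volume hdL, det_toEuclideanLin,
      abs_inv, hdet]
    simp
  exact (h3.comp hL).comp h1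

noncomputable def TMequiv (μ0 : EuclideanSpace ℝ (Fin p)) (M : Matrix (Fin p) (Fin p) ℝ)
    (hd0 : IsUnit M.det) : EuclideanSpace ℝ (Fin p) ≃ᵐ EuclideanSpace ℝ (Fin p) where
  toFun := TM μ0 M
  invFun := TM μ0 M⁻¹
  left_inv := fun x => by
    simp [TM, Matrix.toEuclideanLin_apply, Matrix.mulVec_mulVec, Matrix.nonsing_inv_mul M hd0]
  right_inv := fun x => by
    simp [TM, Matrix.toEuclideanLin_apply, Matrix.mulVec_mulVec, Matrix.mul_nonsing_inv M hd0]
  measurable_toFun := by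
    have : Continuous (TM μ0 M) := by
      unfold TM
      exact continuous_const.add ((Matrix.toEuclideanLin M).continuous_of_finiteDimensional.comp
        (continuous_id.sub continuous_const))
    exact this.measurable
  measurable_invFun := by
    have : Continuous (TM μ0 M⁻¹) := by
      unfold TM
      exact continuous_const.add ((Matrix.toEuclideanLin M⁻¹).continuous_of_finiteDimensional.comp
        (continuous_id.sub continuous_const))
    exact this.measurable

lemma TM_setIntegral {F : Type*} [NormedAddCommGroup F] [NormedSpace ℝ F]
    (μ0 : EuclideanSpace ℝ (Fin p)) {M : Matrix (Fin p) (Fin p) ℝ}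
    (hdet : |M.det| = 1) (g : EuclideanSpace ℝ (Fin p) → F)
    (B : Set (EuclideanSpace ℝ (Fin p))) (hB : TM μ0 M ⁻¹' B = B) :
    ∫ x in B, g (TM μ0 M x) = ∫ x in B, g x := by
  have hd0 : IsUnit M.det := by
    refine isUnit_iff_ne_zero.2 ?_
    intro h; rw [h] at hdet; simp at hdet
  have := (TM_measurePreserving μ0 hdet).setIntegral_preimage_emb
    (TMequiv μ0 M hd0).measurableEmbedding g B
  rwa [hB] at this

end HT2

namespace HT3
variable {p : ℕ} {V0 : Matrix (Fin p) (Fin p) ℝ}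

section S
variable (hV0 : V0.PosDef)

open scoped MatrixOrder in
noncomputable def S (hV0 : V0.PosDef) : Matrix (Fin p) (Fin p) ℝ := CFC.sqrt V0

open scoped MatrixOrder in
lemma S_mul_S : S hV0 * S hV0 = V0 := by
  unfold S; exact CFC.sqrt_mul_sqrt_self V0 (Matrix.nonneg_iff_posSemidef.2 hV0.posSemidef)

open scoped MatrixOrder in
lemma S_symm : (S hV0)ᵀ = S hV0 := by
  have h := (Matrix.nonneg_iff_posSemidef.1 (CFC.sqrt_nonneg V0)).isHermitian
  unfold S
  simpa [Matrix.IsHermitian, Matrix.conjTranspose_eq_transpose_of_trivial] using h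

lemma S_det_ne : (S hV0).det ≠ 0 := by
  intro h
  have h2 : (S hV0 * S hV0).det = 0 := by rw [Matrix.det_mul, h]; ring
  rw [S_mul_S] at h2
  exact hV0.det_pos.ne' h2

lemma S_det_unit : IsUnit (S hV0).det := isUnit_iff_ne_zero.2 (S_det_ne hV0)

lemma Sinv_symm : ((S hV0)⁻¹)ᵀ = (S hV0)⁻¹ := by
  rw [Matrix.transpose_nonsing_inv, S_symm]

lemma V0inv_eq : V0⁻¹ = (S hV0)⁻¹ * (S hV0)⁻¹ := by
  conv_lhs => rw [← S_mul_S hV0]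
  rw [Matrix.mul_inv_rev]

lemma Sinv_mul_S : (S hV0)⁻¹ * S hV0 = 1 := Matrix.nonsing_inv_mul _ (S_det_unit hV0)
lemma S_mul_Sinv : S hV0 * (S hV0)⁻¹ = 1 := Matrix.mul_nonsing_inv _ (S_det_unit hV0)

/-- mahal as a sum of squares. -/
lemma mahal_eq_dot_z (x μ : EuclideanSpace ℝ (Fin p)) :
    mahal x μ V0 = ((S hV0)⁻¹ *ᵥ fun i => x i - μ i) ⬝ᵥ ((S hV0)⁻¹ *ᵥ fun i => x i - μ i) := by
  have h : V0⁻¹ = ((S hV0)⁻¹)ᵀ * (S hV0)⁻¹ := by rw [Sinv_symm hV0]; exact V0inv_eq hV0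
  rw [HT.mahal_dot, h, HT.dot_sq]

include hV0 in
lemma mahal_nonneg (x μ : EuclideanSpace ℝ (Fin p)) : 0 ≤ mahal x μ V0 := by
  rw [mahal_eq_dot_z hV0, dotProduct]
  exact Finset.sum_nonneg fun i _ => mul_self_nonneg _

end S
end HT3

namespace HT4
variable {p : ℕ} {V0 : Matrix (Fin p) (Fin p) ℝ}

lemma abs_pair_le (z : Fin p → ℝ) (i j : Fin p) : |z i * z j| ≤ z ⬝ᵥ z := by
  have hii : z i * z i ≤ z ⬝ᵥ z := by
    rw [dotProduct]
    exact Finset.single_le_sum (f := fun k => z k * z k)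
      (fun k _ => mul_self_nonneg _) (Finset.mem_univ i)
  have hjj : z j * z j ≤ z ⬝ᵥ z := by
    rw [dotProduct]
    exact Finset.single_le_sum (f := fun k => z k * z k)
      (fun k _ => mul_self_nonneg _) (Finset.mem_univ j)
  have h := abs_mul (z i) (z j)
  nlinarith [sq_nonneg (|z i| - |z j|), abs_nonneg (z i), abs_nonneg (z j),
    sq_abs (z i), sq_abs (z j), abs_mul (z i) (z j)]

lemma dot_le (z : Fin p → ℝ) : |z ⬝ᵥ V0 *ᵥ z| ≤ (∑ k, ∑ l, |V0 k l|) * (z ⬝ᵥ z) := by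
  rw [HT.dot_eq]
  refine (Finset.abs_sum_le_sum_abs _ _).trans ?_
  rw [Finset.sum_mul]
  refine Finset.sum_le_sum fun i _ => ?_
  refine (Finset.abs_sum_le_sum_abs _ _).trans ?_
  rw [Finset.sum_mul]
  refine Finset.sum_le_sum fun j _ => ?_
  rw [show z i * V0 i j * z j = V0 i j * (z i * z j) by ring, abs_mul]
  exact mul_le_mul_of_nonneg_left (abs_pair_le z i j) (abs_nonneg _)

lemma dot_self_le (hV0 : V0.PosDef) (x μ : EuclideanSpace ℝ (Fin p)) :
    (fun i => x i - μ i) ⬝ᵥ (fun i => x i - μ i) ≤ (∑ k, ∑ l, |V0 k l|) * mahal x μ V0 := by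
  set y : Fin p → ℝ := fun i => x i - μ i with hy
  set z : Fin p → ℝ := (HT3.S hV0)⁻¹ *ᵥ y with hz
  have hyz : y = HT3.S hV0 *ᵥ z := by
    rw [hz, Matrix.mulVec_mulVec, HT3.S_mul_Sinv hV0, Matrix.one_mulVec]
  calc y ⬝ᵥ y = (HT3.S hV0 *ᵥ z) ⬝ᵥ (HT3.S hV0 *ᵥ z) := by rw [← hyz]
    _ = z ⬝ᵥ ((HT3.S hV0)ᵀ * HT3.S hV0) *ᵥ z := (HT.dot_sq _ _).symm
    _ = z ⬝ᵥ V0 *ᵥ z := by rw [HT3.S_symm, HT3.S_mul_S]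
    _ ≤ (∑ k, ∑ l, |V0 k l|) * (z ⬝ᵥ z) := le_trans (le_abs_self _) (dot_le z)
    _ = (∑ k, ∑ l, |V0 k l|) * mahal x μ V0 := by rw [HT3.mahal_eq_dot_z hV0]

lemma pair_le (hV0 : V0.PosDef) (x μ : EuclideanSpace ℝ (Fin p)) (i j : Fin p) :
    |(x i - μ i) * (x j - μ j)| ≤ (∑ k, ∑ l, |V0 k l|) * mahal x μ V0 :=
  le_trans (abs_pair_le (fun i => x i - μ i) i j) (by
    have := dot_self_le hV0 x μ
    calc (fun i => x i - μ i) ⬝ᵥ (fun i => x i - μ i) ≤ _ := this)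

lemma mahal_smul (hV0 : V0.PosDef) {a : ℝ} (ha : 0 < a) (x μ : EuclideanSpace ℝ (Fin p)) :
    mahal x μ (a • V0) = a⁻¹ * mahal x μ V0 := by
  have hdet : IsUnit V0.det := isUnit_iff_ne_zero.2 hV0.det_pos.ne'
  have hinv : (a • V0)⁻¹ = a⁻¹ • V0⁻¹ := by
    apply Matrix.inv_eq_left_inv
    rw [Matrix.smul_mul, Matrix.mul_smul, smul_smul, inv_mul_cancel₀ ha.ne',
      one_smul, Matrix.nonsing_inv_mul _ hdet]
  unfold mahal
  rw [hinv, Finset.mul_sum]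
  refine Finset.sum_congr rfl fun i _ => ?_
  rw [Finset.mul_sum]
  refine Finset.sum_congr rfl fun j _ => ?_
  simp [Matrix.smul_apply]
  ring

lemma mahal_TM (hV0 : V0.PosDef) {M : Matrix (Fin p) (Fin p) ℝ}
    (hM : Mᵀ * V0⁻¹ * M = V0⁻¹) (μ0 x : EuclideanSpace ℝ (Fin p)) :
    mahal (HT2.TM μ0 M x) μ0 V0 = mahal x μ0 V0 := by
  rw [HT.mahal_dot, HT.mahal_dot, HT2.TM_coord, HT.quad_inv hM]

end HT4

namespace HT5
variable {p : ℕ}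

noncomputable def R (k : Fin p) : Matrix (Fin p) (Fin p) ℝ :=
  Matrix.diagonal (fun l => if l = k then -1 else 1)

lemma R_transpose (k : Fin p) : (R k)ᵀ = R k := Matrix.diagonal_transpose _

lemma R_orth (k : Fin p) : (R k)ᵀ * R k = 1 := by
  rw [R_transpose, R, Matrix.diagonal_mul_diagonal]
  have : (fun i => (if i = k then (-1:ℝ) else 1) * (if i = k then (-1:ℝ) else 1)) =
      fun _ => (1:ℝ) := by
    funext i; by_cases h : i = k <;> simp [h]
  rw [this, Matrix.diagonal_one]

lemma R_det_abs (k : Fin p) : |(R k).det| = 1 := by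
  rw [R, Matrix.det_diagonal, Finset.abs_prod]
  rw [Finset.prod_eq_one]
  intro l _
  by_cases h : l = k <;> simp [h]

lemma conj_R (B : Matrix (Fin p) (Fin p) ℝ) (k i j : Fin p) :
    (R k * B * (R k)ᵀ) i j =
      (if i = k then (-1:ℝ) else 1) * (if j = k then (-1:ℝ) else 1) * B i j := by
  rw [R_transpose, R, Matrix.mul_diagonal, Matrix.diagonal_mul]
  ring

lemma perm_transpose (σ : Equiv.Perm (Fin p)) :
    (σ.permMatrix ℝ)ᵀ = (σ⁻¹).permMatrix ℝ := by
  ext i j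
  simp only [Matrix.transpose_apply, Equiv.Perm.permMatrix, PEquiv.toMatrix_apply,
    Equiv.toPEquiv_apply, Option.mem_def, Option.some.injEq]
  by_cases h : σ j = i
  · rw [if_pos h, if_pos (by rw [← h]; simp)]
  · rw [if_neg h, if_neg (fun hc => h (by rw [← hc]; simp))]

set_option maxRecDepth 4000 in
lemma perm_orth (σ : Equiv.Perm (Fin p)) : (σ.permMatrix ℝ)ᵀ * σ.permMatrix ℝ = 1 := by
  rw [perm_transpose, show ((σ⁻¹).permMatrix ℝ) * (σ.permMatrix ℝ)
      = (σ.permMatrix ℝ).submatrix (⇑σ⁻¹) id from PEquiv.toMatrix_toPEquiv_mul σ⁻¹ _]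
  ext i j
  rw [Matrix.submatrix_apply]
  simp only [Equiv.Perm.permMatrix, PEquiv.toMatrix_apply, Equiv.toPEquiv_apply,
    Option.mem_def, Option.some.injEq, id_eq, Equiv.Perm.inv_def, Equiv.apply_symm_apply, Matrix.one_apply]

lemma perm_det_abs (σ : Equiv.Perm (Fin p)) : |(σ.permMatrix ℝ).det| = 1 := by
  rw [Matrix.det_permutation]
  rcases Int.units_eq_one_or (Equiv.Perm.sign σ) with h | h <;> rw [h] <;> norm_num

lemma conj_perm (B : Matrix (Fin p) (Fin p) ℝ) (σ : Equiv.Perm (Fin p)) (i j : Fin p) :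
    (σ.permMatrix ℝ * B * (σ.permMatrix ℝ)ᵀ) i j = B (σ i) (σ j) := by
  rw [perm_transpose]
  rw [show (σ.permMatrix ℝ * B * (σ⁻¹).permMatrix ℝ)
      = ((B.submatrix σ id).submatrix id (σ⁻¹).symm) by
    rw [← PEquiv.toMatrix_toPEquiv_mul, ← PEquiv.mul_toMatrix_toPEquiv]]
  simp [Matrix.submatrix_apply, Equiv.Perm.inv_def]

end HT5

namespace HT6
variable {p : ℕ} {V0 : Matrix (Fin p) (Fin p) ℝ}

lemma conjS_cond (hV0 : V0.PosDef) {O : Matrix (Fin p) (Fin p) ℝ} (hO : Oᵀ * O = 1) :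
    (HT3.S hV0 * O * (HT3.S hV0)⁻¹)ᵀ * V0⁻¹ * (HT3.S hV0 * O * (HT3.S hV0)⁻¹) = V0⁻¹ := by
  have e1 : ∀ X : Matrix (Fin p) (Fin p) ℝ, HT3.S hV0 * ((HT3.S hV0)⁻¹ * X) = X := fun X => by
    rw [← Matrix.mul_assoc, HT3.S_mul_Sinv, Matrix.one_mul]
  have e2 : ∀ X : Matrix (Fin p) (Fin p) ℝ, (HT3.S hV0)⁻¹ * (HT3.S hV0 * X) = X := fun X => by
    rw [← Matrix.mul_assoc, HT3.Sinv_mul_S, Matrix.one_mul]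
  have e3 : ∀ X : Matrix (Fin p) (Fin p) ℝ, Oᵀ * (O * X) = X := fun X => by
    rw [← Matrix.mul_assoc, hO, Matrix.one_mul]
  rw [HT3.V0inv_eq hV0]
  simp only [Matrix.transpose_mul, HT3.S_symm, HT3.Sinv_symm, Matrix.mul_assoc]
  rw [e1, e2, e3]

lemma conjS_det (hV0 : V0.PosDef) (O : Matrix (Fin p) (Fin p) ℝ) :
    |(HT3.S hV0 * O * (HT3.S hV0)⁻¹).det| = |O.det| := by
  have h := HT3.S_det_ne hV0
  rw [Matrix.det_mul, Matrix.det_mul, Matrix.det_nonsing_inv, Ring.inverse_eq_inv',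
    abs_mul, abs_mul, abs_inv]
  field_simp

lemma mahal_continuous (μ0 : EuclideanSpace ℝ (Fin p)) (V : Matrix (Fin p) (Fin p) ℝ) :
    Continuous fun x : EuclideanSpace ℝ (Fin p) => mahal x μ0 V := by
  unfold mahal
  refine continuous_finset_sum _ fun i _ => continuous_finset_sum _ fun j _ => ?_
  have hc : ∀ k : Fin p, Continuous fun x : EuclideanSpace ℝ (Fin p) => x k := fun k => by
    simpa using (EuclideanSpace.proj k (𝕜 := ℝ)).continuous
  exact (((hc i).sub continuous_const).mul continuous_const).mul ((hc j).sub continuous_const)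

end HT6

/-- Corollary 1: hard-threshold exponential weight.  For an
elliptical density `f` with parameters `(μ0, V0)`, any `α ∈ (0,1)` and every
`a > 0`, the pair `(μ, V) = (μ0, a V0)` solves the truncated estimating
equations `∫_{B(μ,V)} e^{−d(x,μ,V)} (x−μ) f(x) dx = 0` and
`∫_{B(μ,V)} e^{−d(x,μ,V)} ((x−μ)(x−μ)ᵀ − (d(x,μ,V)/p) V) f(x) dx = 0`
(the matrix equation being read entrywise). -/
theorem hard_threshold_truncated_estimating_equations
    {p : ℕ} (hp : 1 ≤ p)
    (α : ℝ) (hα : α ∈ Set.Ioo (0 : ℝ) 1)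
    (μ0 : EuclideanSpace ℝ (Fin p)) (V0 : Matrix (Fin p) (Fin p) ℝ)
    (hV0sym : V0.IsSymm) (hV0 : V0.PosDef)
    (ψ : ℝ → ℝ) (hψmeas : Measurable ψ) (hψpos : ∀ u, 0 ≤ u → 0 < ψ u)
    (f : EuclideanSpace ℝ (Fin p) → ℝ)
    (hf : ∀ x, f x = (Real.sqrt V0.det)⁻¹ * ψ (mahal x μ0 V0))
    (hf1 : ∫ x, f x = 1)
    (a : ℝ) (ha : 0 < a) :
    (∫ x in centralRegion α μ0 (a • V0),
        (Real.exp (-(mahal x μ0 (a • V0))) * f x) • (x - μ0) = 0) ∧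
    (∀ i j : Fin p,
      ∫ x in centralRegion α μ0 (a • V0),
        Real.exp (-(mahal x μ0 (a • V0))) *
          ((x i - μ0 i) * (x j - μ0 j) - (mahal x μ0 (a • V0) / p) * (a • V0) i j) *
          f x = 0) := by
  obtain ⟨hα0, hα1⟩ := hα
  have hlog : 0 < Real.log (1 / α) := Real.log_pos (one_lt_one_div hα0 hα1)
  set B := centralRegion α μ0 (a • V0) with hBdef
  have hdV : ∀ x, mahal x μ0 (a • V0) = a⁻¹ * mahal x μ0 V0 :=
    fun x => HT4.mahal_smul hV0 ha x μ0
  have hm0 : ∀ x, 0 ≤ mahal x μ0 V0 := fun x => HT3.mahal_nonneg hV0 x μ0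
  have hd0 : ∀ x, 0 ≤ mahal x μ0 (a • V0) := fun x => by
    rw [hdV]; exact mul_nonneg (inv_nonneg.2 ha.le) (hm0 x)
  have hdB : ∀ x ∈ B, mahal x μ0 (a • V0) < Real.log (1 / α) := fun x hx => hx
  have hmB : ∀ x ∈ B, mahal x μ0 V0 < a * Real.log (1 / α) := by
    intro x hx
    have h1 := hdB x hx
    rw [hdV] at h1
    have h2 : a * (a⁻¹ * mahal x μ0 V0) < a * Real.log (1 / α) :=
      mul_lt_mul_of_pos_left h1 ha
    rwa [← mul_assoc, mul_inv_cancel₀ ha.ne', one_mul] at h2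
  have hcont : Continuous fun x : EuclideanSpace ℝ (Fin p) => mahal x μ0 (a • V0) :=
    HT6.mahal_continuous μ0 (a • V0)
  have hcontV0 : Continuous fun x : EuclideanSpace ℝ (Fin p) => mahal x μ0 V0 :=
    HT6.mahal_continuous μ0 V0
  have hBmeas : MeasurableSet B :=
    measurableSet_lt hcont.measurable measurable_const
  have hcoord : ∀ k : Fin p, Continuous fun x : EuclideanSpace ℝ (Fin p) => x k := fun k => by
    simpa using (EuclideanSpace.proj k (𝕜 := ℝ)).continuous
  -- facts about f
  have hfmeas : Measurable f := by
    have : f = fun x => (Real.sqrt V0.det)⁻¹ * ψ (mahal x μ0 V0) := funext hf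
    rw [this]
    exact measurable_const.mul (hψmeas.comp hcontV0.measurable)
  have hfnn : ∀ x, 0 ≤ f x := fun x => by
    rw [hf]
    exact mul_nonneg (inv_nonneg.2 (Real.sqrt_nonneg _)) (hψpos _ (hm0 x)).le
  have hfint : Integrable f := by
    by_contra h
    rw [integral_undef h] at hf1
    exact one_ne_zero hf1.symm
  -- bounds
  set C := ∑ k, ∑ l, |V0 k l| with hCdef
  have hC0 : 0 ≤ C := Finset.sum_nonneg fun k _ => Finset.sum_nonneg fun l _ => abs_nonneg _
  set K := C * (a * Real.log (1 / α)) with hKdef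
  have hpairB : ∀ x ∈ B, ∀ i j : Fin p, |(x i - μ0 i) * (x j - μ0 j)| ≤ K := fun x hx i j =>
    (HT4.pair_le hV0 x μ0 i j).trans (mul_le_mul_of_nonneg_left (hmB x hx).le hC0)
  -- integrability machine
  have key_int : ∀ (g : EuclideanSpace ℝ (Fin p) → ℝ) (K' : ℝ), Measurable g →
      (∀ x ∈ B, |g x| ≤ K') → IntegrableOn (fun x => g x * f x) B volume := by
    intro g K' hg hgK
    have hKf : IntegrableOn (fun x => K' * f x) B volume := (hfint.const_mul K').integrableOn
    refine Integrable.mono hKf ((hg.mul hfmeas).aestronglyMeasurable) ?_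
    rw [ae_restrict_iff' hBmeas]
    filter_upwards with x hx
    rw [Real.norm_eq_abs, Real.norm_eq_abs, abs_mul, abs_mul, abs_of_nonneg (hfnn x)]
    exact mul_le_mul_of_nonneg_right ((hgK x hx).trans (le_abs_self K')) (hfnn x)
  -- invariance of B and of f under TM
  have hTB : ∀ M : Matrix (Fin p) (Fin p) ℝ, Mᵀ * V0⁻¹ * M = V0⁻¹ →
      HT2.TM μ0 M ⁻¹' B = B := by
    intro M hM
    ext x
    show mahal (HT2.TM μ0 M x) μ0 (a • V0) < _ ↔ mahal x μ0 (a • V0) < _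
    rw [hdV, hdV, HT4.mahal_TM hV0 hM]
  have hdT : ∀ (M : Matrix (Fin p) (Fin p) ℝ), Mᵀ * V0⁻¹ * M = V0⁻¹ → ∀ x,
      mahal (HT2.TM μ0 M x) μ0 (a • V0) = mahal x μ0 (a • V0) := by
    intro M hM x
    rw [hdV, hdV, HT4.mahal_TM hV0 hM]
  have hfT : ∀ (M : Matrix (Fin p) (Fin p) ℝ), Mᵀ * V0⁻¹ * M = V0⁻¹ → ∀ x,
      f (HT2.TM μ0 M x) = f x := by
    intro M hM x
    rw [hf, hf, HT4.mahal_TM hV0 hM]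
  constructor
  · -- first estimating equation
    have hM1 : ((-1 : Matrix (Fin p) (Fin p) ℝ))ᵀ * V0⁻¹ * (-1) = V0⁻¹ := by
      simp
    have hM1det : |(-1 : Matrix (Fin p) (Fin p) ℝ).det| = 1 := by
      rw [show (-1 : Matrix (Fin p) (Fin p) ℝ) = (-1 : ℝ) • (1 : Matrix (Fin p) (Fin p) ℝ) by
          simp,
        Matrix.det_smul, Matrix.det_one, mul_one, abs_pow, abs_neg, abs_one, one_pow]
    have hTM1 : ∀ x : EuclideanSpace ℝ (Fin p), HT2.TM μ0 (-1) x - μ0 = -(x - μ0) := by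
      intro x
      show μ0 + Matrix.toEuclideanLin (-1) (x - μ0) - μ0 = -(x - μ0)
      have h2 : Matrix.toEuclideanLin (-1 : Matrix (Fin p) (Fin p) ℝ) (x - μ0) = -(x - μ0) := by
        ext i
        simp [Matrix.toEuclideanLin_apply, Matrix.neg_mulVec, Matrix.one_mulVec]
      rw [h2, add_sub_cancel_left]
    have hsub := HT2.TM_setIntegral μ0 hM1det
      (fun x => (Real.exp (-(mahal x μ0 (a • V0))) * f x) • (x - μ0)) B (hTB _ hM1)
    have heq : ∀ x : EuclideanSpace ℝ (Fin p),
        (Real.exp (-(mahal (HT2.TM μ0 (-1) x) μ0 (a • V0))) * f (HT2.TM μ0 (-1) x)) •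
            (HT2.TM μ0 (-1) x - μ0)
          = -((Real.exp (-(mahal x μ0 (a • V0))) * f x) • (x - μ0)) := by
      intro x
      rw [hdT _ hM1, hfT _ hM1, hTM1, smul_neg]
    simp only [heq] at hsub
    rw [integral_neg] at hsub
    have h2 : (2 : ℝ) • (∫ x in B, (Real.exp (-(mahal x μ0 (a • V0))) * f x) • (x - μ0)) = 0 := by
      rw [two_smul]
      nth_rewrite 1 [← hsub]
      simp
    rcases smul_eq_zero.1 h2 with h | h
    · norm_num at h
    · exact h
  · -- second estimating equation
    intro i j
    have hpne : ((p : ℝ)) ≠ 0 := Nat.cast_ne_zero.2 (by omega)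
    set A : Matrix (Fin p) (Fin p) ℝ := Matrix.of fun k l =>
      ∫ x in B, Real.exp (-(mahal x μ0 (a • V0))) * ((x k - μ0 k) * (x l - μ0 l)) * f x
      with hAdef
    have hA_apply : ∀ k l, A k l = ∫ x in B,
        Real.exp (-(mahal x μ0 (a • V0))) * ((x k - μ0 k) * (x l - μ0 l)) * f x :=
      fun k l => rfl
    set J : ℝ := ∫ x in B, Real.exp (-(mahal x μ0 (a • V0))) * mahal x μ0 (a • V0) * f x
      with hJdef
    have hexp_le : ∀ x, Real.exp (-(mahal x μ0 (a • V0))) ≤ 1 := fun x =>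
      Real.exp_le_one_iff.2 (neg_nonpos.2 (hd0 x))
    have hwmeas : ∀ k l : Fin p, Measurable fun x : EuclideanSpace ℝ (Fin p) =>
        Real.exp (-(mahal x μ0 (a • V0))) * ((x k - μ0 k) * (x l - μ0 l)) := fun k l =>
      ((Real.continuous_exp.comp hcont.neg).mul
        (((hcoord k).sub continuous_const).mul
          ((hcoord l).sub continuous_const))).measurable
    have hInt : ∀ k l : Fin p, IntegrableOn (fun x =>
        Real.exp (-(mahal x μ0 (a • V0))) * ((x k - μ0 k) * (x l - μ0 l)) * f x) B volume := by
      intro k l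
      refine key_int _ K (hwmeas k l) ?_
      intro x hx
      rw [abs_mul, abs_of_nonneg (Real.exp_nonneg _)]
      calc Real.exp (-(mahal x μ0 (a • V0))) * |(x k - μ0 k) * (x l - μ0 l)|
          ≤ 1 * K := mul_le_mul (hexp_le x) (hpairB x hx k l) (abs_nonneg _) zero_le_one
        _ = K := one_mul K
    have hJInt : IntegrableOn
        (fun x => Real.exp (-(mahal x μ0 (a • V0))) * mahal x μ0 (a • V0) * f x) B volume := by
      refine key_int _ (Real.log (1 / α))
        ((Real.continuous_exp.comp hcont.neg).mul hcont).measurable ?_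
      intro x hx
      rw [abs_mul, abs_of_nonneg (Real.exp_nonneg _), abs_of_nonneg (hd0 x)]
      calc Real.exp (-(mahal x μ0 (a • V0))) * mahal x μ0 (a • V0)
          ≤ 1 * mahal x μ0 (a • V0) := mul_le_mul_of_nonneg_right (hexp_le x) (hd0 x)
        _ = mahal x μ0 (a • V0) := one_mul _
        _ ≤ Real.log (1 / α) := (hdB x hx).le
    -- invariance of the second-moment matrix
    have hA_conj : ∀ M : Matrix (Fin p) (Fin p) ℝ, Mᵀ * V0⁻¹ * M = V0⁻¹ → |M.det| = 1 →
        A = M * A * Mᵀ := by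
      intro M hM hMdet
      ext k l
      have hco : ∀ (x : EuclideanSpace ℝ (Fin p)) (k : Fin p),
          HT2.TM μ0 M x k - μ0 k = ∑ m, M k m * (x m - μ0 m) := by
        intro x k
        have h1 := congrFun (HT2.TM_coord μ0 M x) k
        rw [h1]
        simp [Matrix.mulVec, dotProduct]
      have hsub := HT2.TM_setIntegral μ0 hMdet
        (fun x => Real.exp (-(mahal x μ0 (a • V0))) *
          ((x k - μ0 k) * (x l - μ0 l)) * f x) B (hTB _ hM)
      have hpt : ∀ x : EuclideanSpace ℝ (Fin p),
          Real.exp (-(mahal (HT2.TM μ0 M x) μ0 (a • V0))) *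
            ((HT2.TM μ0 M x k - μ0 k) * (HT2.TM μ0 M x l - μ0 l)) * f (HT2.TM μ0 M x)
          = ∑ m, ∑ n, (M k m * M l n) *
              (Real.exp (-(mahal x μ0 (a • V0))) * ((x m - μ0 m) * (x n - μ0 n)) * f x) := by
        intro x
        rw [hdT _ hM, hfT _ hM, hco x k, hco x l, Finset.sum_mul_sum]
        simp only [Finset.mul_sum, Finset.sum_mul]
        refine Finset.sum_congr rfl fun m _ => Finset.sum_congr rfl fun n _ => ?_
        ring
      simp only [hpt] at hsub
      have hLHS : (∫ x in B, ∑ m, ∑ n, (M k m * M l n) *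
            (Real.exp (-(mahal x μ0 (a • V0))) * ((x m - μ0 m) * (x n - μ0 n)) * f x))
          = ∑ m, ∑ n, (M k m * M l n) * A m n := by
        rw [integral_finset_sum _ (fun m _ => integrable_finset_sum _
          (fun n _ => ((hInt m n).const_mul _)))]
        refine Finset.sum_congr rfl fun m _ => ?_
        rw [integral_finset_sum _ (fun n _ => ((hInt m n).const_mul _))]
        refine Finset.sum_congr rfl fun n _ => ?_
        rw [integral_const_mul, hA_apply]
      have hMA : (M * A * Mᵀ) k l = ∑ m, ∑ n, (M k m * M l n) * A m n := by
        rw [Matrix.mul_apply]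
        simp_rw [Matrix.mul_apply, Matrix.transpose_apply, Finset.sum_mul]
        rw [Finset.sum_comm]
        exact Finset.sum_congr rfl fun m _ => Finset.sum_congr rfl fun n _ => by ring
      rw [hMA, ← hLHS, hsub]
      exact hA_apply k l
    -- whitened second-moment matrix
    have e1 : ∀ X : Matrix (Fin p) (Fin p) ℝ, HT3.S hV0 * ((HT3.S hV0)⁻¹ * X) = X := fun X => by
      rw [← Matrix.mul_assoc, HT3.S_mul_Sinv, Matrix.one_mul]
    have e2 : ∀ X : Matrix (Fin p) (Fin p) ℝ, (HT3.S hV0)⁻¹ * (HT3.S hV0 * X) = X := fun X => by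
      rw [← Matrix.mul_assoc, HT3.Sinv_mul_S, Matrix.one_mul]
    set Ah : Matrix (Fin p) (Fin p) ℝ := (HT3.S hV0)⁻¹ * A * (HT3.S hV0)⁻¹ with hAhdef
    have hconjO : ∀ O : Matrix (Fin p) (Fin p) ℝ, Oᵀ * O = 1 → |O.det| = 1 →
        Ah = O * Ah * Oᵀ := by
      intro O hO hOdet
      have h := hA_conj (HT3.S hV0 * O * (HT3.S hV0)⁻¹) (HT6.conjS_cond hV0 hO)
        (by rw [HT6.conjS_det hV0]; exact hOdet)
      have htrans : (HT3.S hV0 * O * (HT3.S hV0)⁻¹)ᵀ = (HT3.S hV0)⁻¹ * Oᵀ * HT3.S hV0 := by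
        rw [Matrix.transpose_mul, Matrix.transpose_mul, HT3.S_symm, HT3.Sinv_symm,
          Matrix.mul_assoc]
      rw [hAhdef]
      conv_lhs => rw [h]
      rw [htrans]
      simp only [Matrix.mul_assoc]
      rw [e2, HT3.S_mul_Sinv hV0, Matrix.mul_one]
    have hoff : ∀ k l : Fin p, k ≠ l → Ah k l = 0 := by
      intro k l hkl
      have h := congrFun (congrFun (hconjO (HT5.R k) (HT5.R_orth k) (HT5.R_det_abs k)) k) l
      rw [HT5.conj_R, if_pos rfl, if_neg (fun hc : l = k => hkl hc.symm)] at h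
      linarith
    have hdiagAll : ∀ k l : Fin p, Ah k k = Ah l l := by
      intro k l
      have h := congrFun (congrFun (hconjO ((Equiv.swap k l).permMatrix ℝ)
        (HT5.perm_orth _) (HT5.perm_det_abs _)) k) k
      rw [HT5.conj_perm, Equiv.swap_apply_left] at h
      exact h
    have hrev : ∀ x, mahal x μ0 V0 = a * mahal x μ0 (a • V0) := fun x => by
      rw [hdV, ← mul_assoc, mul_inv_cancel₀ ha.ne', one_mul]
    have hsym : ∀ k l : Fin p, V0⁻¹ l k = V0⁻¹ k l := by
      intro k l
      have h : V0⁻¹ᵀ = V0⁻¹ := by rw [Matrix.transpose_nonsing_inv, hV0sym.eq]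
      conv_rhs => rw [← h]
      rfl
    have htr : ∑ k, Ah k k = a * J := by
      have h1 : ∑ k, Ah k k = Matrix.trace (A * V0⁻¹) := by
        calc ∑ k, Ah k k = Matrix.trace ((HT3.S hV0)⁻¹ * (A * (HT3.S hV0)⁻¹)) := by
              rw [hAhdef, Matrix.mul_assoc]; simp [Matrix.trace, Matrix.diag]
          _ = Matrix.trace ((A * (HT3.S hV0)⁻¹) * (HT3.S hV0)⁻¹) := Matrix.trace_mul_comm _ _
          _ = Matrix.trace (A * V0⁻¹) := by rw [Matrix.mul_assoc, ← HT3.V0inv_eq hV0]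
      have h2 : Matrix.trace (A * V0⁻¹) = ∑ k, ∑ l, A k l * V0⁻¹ l k := by
        simp [Matrix.trace, Matrix.diag, Matrix.mul_apply]
      have h3 : ∀ k l : Fin p, A k l * V0⁻¹ l k = ∫ x in B, V0⁻¹ k l *
          (Real.exp (-(mahal x μ0 (a • V0))) * ((x k - μ0 k) * (x l - μ0 l)) * f x) := by
        intro k l
        rw [integral_const_mul, ← hA_apply, hsym k l, mul_comm]
      have h4 : (∫ x in B, ∑ k, ∑ l, V0⁻¹ k l *
            (Real.exp (-(mahal x μ0 (a • V0))) * ((x k - μ0 k) * (x l - μ0 l)) * f x))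
          = ∑ k, ∑ l, ∫ x in B, V0⁻¹ k l *
            (Real.exp (-(mahal x μ0 (a • V0))) * ((x k - μ0 k) * (x l - μ0 l)) * f x) := by
        rw [integral_finset_sum _ (fun k _ => integrable_finset_sum _
          (fun l _ => ((hInt k l).const_mul (V0⁻¹ k l))))]
        exact Finset.sum_congr rfl fun k _ =>
          integral_finset_sum _ (fun l _ => ((hInt k l).const_mul (V0⁻¹ k l)))
      have h5 : ∀ x : EuclideanSpace ℝ (Fin p), (∑ k, ∑ l, V0⁻¹ k l *
            (Real.exp (-(mahal x μ0 (a • V0))) * ((x k - μ0 k) * (x l - μ0 l)) * f x))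
          = a * (Real.exp (-(mahal x μ0 (a • V0))) * mahal x μ0 (a • V0) * f x) := by
        intro x
        have hm : mahal x μ0 V0 = ∑ k, ∑ l, (x k - μ0 k) * V0⁻¹ k l * (x l - μ0 l) := rfl
        calc (∑ k, ∑ l, V0⁻¹ k l *
              (Real.exp (-(mahal x μ0 (a • V0))) * ((x k - μ0 k) * (x l - μ0 l)) * f x))
            = Real.exp (-(mahal x μ0 (a • V0))) *
              (∑ k, ∑ l, (x k - μ0 k) * V0⁻¹ k l * (x l - μ0 l)) * f x := by
              simp only [Finset.mul_sum, Finset.sum_mul]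
              exact Finset.sum_congr rfl fun k _ => Finset.sum_congr rfl fun l _ => by ring
          _ = Real.exp (-(mahal x μ0 (a • V0))) * mahal x μ0 V0 * f x := by rw [← hm]
          _ = a * (Real.exp (-(mahal x μ0 (a • V0))) * mahal x μ0 (a • V0) * f x) := by
              rw [hrev x]; ring
      rw [h1, h2]
      calc ∑ k, ∑ l, A k l * V0⁻¹ l k
          = ∑ k, ∑ l, ∫ x in B, V0⁻¹ k l *
            (Real.exp (-(mahal x μ0 (a • V0))) * ((x k - μ0 k) * (x l - μ0 l)) * f x) :=
            Finset.sum_congr rfl fun k _ => Finset.sum_congr rfl fun l _ => h3 k l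
        _ = ∫ x in B, ∑ k, ∑ l, V0⁻¹ k l *
            (Real.exp (-(mahal x μ0 (a • V0))) * ((x k - μ0 k) * (x l - μ0 l)) * f x) :=
            h4.symm
        _ = ∫ x in B, a * (Real.exp (-(mahal x μ0 (a • V0))) * mahal x μ0 (a • V0) * f x) := by
            exact integral_congr_ae (Filter.Eventually.of_forall fun x => h5 x)
        _ = a * J := by rw [integral_const_mul, hJdef]
    have hAhval : ∀ k, Ah k k = a * J / p := by
      intro k
      have hsum : ∑ l, Ah l l = (p : ℝ) * Ah k k := by
        rw [Finset.sum_congr rfl (fun l _ => hdiagAll l k)]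
        simp [Finset.sum_const, Finset.card_univ, mul_comm]
      have h4 : (p : ℝ) * Ah k k = a * J := by rw [← hsum]; exact htr
      rw [eq_div_iff hpne]
      linarith
    have hAval : A i j = (a * J / p) * V0 i j := by
      have hA_from : A = HT3.S hV0 * Ah * HT3.S hV0 := by
        rw [hAhdef]
        simp only [Matrix.mul_assoc]
        rw [HT3.Sinv_mul_S hV0, Matrix.mul_one, e1]
      have hAh_eq : Ah = (a * J / p) • (1 : Matrix (Fin p) (Fin p) ℝ) := by
        ext k l
        by_cases h : k = l
        · subst h
          rw [Matrix.smul_apply, Matrix.one_apply_eq, smul_eq_mul, mul_one]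
          exact hAhval k
        · rw [hoff k l h, Matrix.smul_apply, Matrix.one_apply_ne h, smul_eq_mul, mul_zero]
      rw [hA_from, hAh_eq, Matrix.mul_smul, Matrix.mul_one, Matrix.smul_mul,
        HT3.S_mul_S hV0, Matrix.smul_apply, smul_eq_mul]
    have hsplit : ∀ x : EuclideanSpace ℝ (Fin p),
        Real.exp (-(mahal x μ0 (a • V0))) *
          ((x i - μ0 i) * (x j - μ0 j) - (mahal x μ0 (a • V0) / p) * (a • V0) i j) * f x
        = Real.exp (-(mahal x μ0 (a • V0))) * ((x i - μ0 i) * (x j - μ0 j)) * f x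
          - ((a • V0) i j / p) *
            (Real.exp (-(mahal x μ0 (a • V0))) * mahal x μ0 (a • V0) * f x) := by
      intro x; ring
    simp only [hsplit]
    rw [integral_sub (hInt i j) (hJInt.const_mul _), integral_const_mul,
      ← hA_apply i j, ← hJdef, hAval]
    have hsmul : (a • V0) i j = a * V0 i j := by simp [Matrix.smul_apply]
    rw [hsmul]
    ring
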